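/- Let Ω ⊂ ℝ³ be measurable with finite Lebesgue measure, M > 0, and let W : M^{3×3} → [0,+∞] satisfy: W is finite-valued and of class C¹ on M^{3×3}_+; W ≥ 0 everywhere and W(Id) = 0; W is finite-valued and of class C² on the open δ-neighbourhood of SO(3) for some δ > 0; and |DW(F)Fᵀ| ≤ k(W(F)+1) for every F ∈ M^{3×3}_+, for some k > 0. Let t_h → 0⁺ with t_h ∈ (0,1], let s_h ∈ (0,1] with t_h/s_h → 0, and let G_h : Ω → M^{3×3} be measurable with det(Id + t_h G_h(x)) > 0 for a.e. x, ‖G_h‖_{L²(Ω)} ≤ M and ∫_Ω W(Id + t_h G_h) dx ≤ M t_h². Set B_h := {x ∈ Ω : t_h|G_h(x)| ≤ s_h} and E_h := t_h⁻¹ DW(Id + t_h G_h)(Id + t_h G_h)ᵀ. Then |Ω \ B_h| ≤ M²(t_h/s_h)², and there is a constant C > 0 (depending only on W and M) such that ∫_{Ω\B_h} |E_h| dx ≤ C t_h/s_h; in particular the functions 1_{Ω\B_h} E_h converge to 0 strongly in L¹(Ω; M^{3×3}) as h → 0. -/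

import Mathlib

open Matrix MeasureTheory Filter Topology
open scoped ENNReal

noncomputable section

attribute [local instance] Matrix.normedAddCommGroup Matrix.normedSpace

/-- The Frobenius inner product `A : B = tr (Aᵀ B) = ∑ᵢⱼ Aᵢⱼ Bᵢⱼ`. -/
def frobInner {n : ℕ} (A B : Matrix (Fin n) (Fin n) ℝ) : ℝ := ∑ i, ∑ j, A i j * B i j

/-- The Frobenius norm `|A| = (A : A)^{1/2}`. -/
def frobNorm {n : ℕ} (A : Matrix (Fin n) (Fin n) ℝ) : ℝ := Real.sqrt (frobInner A A)

/-- The gradient of a function on 3×3 matrices with respect to the Frobenius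
inner product: `(DW F)ᵢⱼ = ∂W/∂Fᵢⱼ`. -/
def matGrad (w : Matrix (Fin 3) (Fin 3) ℝ → ℝ) (F : Matrix (Fin 3) (Fin 3) ℝ) :
    Matrix (Fin 3) (Fin 3) ℝ :=
  fun i j => fderiv ℝ w F (Matrix.single i j 1)

/-- The set of proper rotations SO(3). -/
def SO3 : Set (Matrix (Fin 3) (Fin 3) ℝ) := {R | Rᵀ * R = 1 ∧ R.det = 1}

/-- The real-valued function associated to an extended-real-valued energy density. -/
def wr (W : Matrix (Fin 3) (Fin 3) ℝ → ℝ≥0∞) : Matrix (Fin 3) (Fin 3) ℝ → ℝ :=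
  fun F => (W F).toReal

/-- The Frobenius distance from a matrix to SO(3). -/
def distSO3 (F : Matrix (Fin 3) (Fin 3) ℝ) : ℝ :=
  sInf ((fun R => frobNorm (F - R)) '' SO3)

instance : NormedAddCommGroup (Matrix (Fin 3) (Fin 3) ℝ →L[ℝ] ℝ) :=
  ContinuousLinearMap.toNormedAddCommGroup

instance : NormedSpace ℝ (Matrix (Fin 3) (Fin 3) ℝ →L[ℝ] ℝ) :=
  ContinuousLinearMap.toNormedSpace

instance : NormedAddCommGroup
    (Matrix (Fin 3) (Fin 3) ℝ →L[ℝ] Matrix (Fin 3) (Fin 3) ℝ →L[ℝ] ℝ) :=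
  ContinuousLinearMap.toNormedAddCommGroup

lemma frobInner_self_nonneg {n : ℕ} (A : Matrix (Fin n) (Fin n) ℝ) : 0 ≤ frobInner A A :=
  Finset.sum_nonneg fun _ _ => Finset.sum_nonneg fun _ _ => mul_self_nonneg _

lemma frobNorm_nonneg {n : ℕ} (A : Matrix (Fin n) (Fin n) ℝ) : 0 ≤ frobNorm A :=
  Real.sqrt_nonneg _

lemma abs_entry_le_frobNorm {n : ℕ} (A : Matrix (Fin n) (Fin n) ℝ) (i j : Fin n) :
    |A i j| ≤ frobNorm A := by
  rw [frobNorm, ← Real.sqrt_sq_eq_abs]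
  apply Real.sqrt_le_sqrt
  have h1 : A i j ^ 2 ≤ ∑ j', A i j' * A i j' := by
    have := Finset.single_le_sum (f := fun j' => A i j' * A i j')
      (fun j' _ => mul_self_nonneg _) (Finset.mem_univ j)
    simpa [sq] using this
  have h2 : (∑ j', A i j' * A i j') ≤ frobInner A A :=
    Finset.single_le_sum (f := fun i' => ∑ j', A i' j' * A i' j')
      (fun i' _ => Finset.sum_nonneg fun _ _ => mul_self_nonneg _) (Finset.mem_univ i)
  exact h1.trans h2

lemma norm_le_frobNorm {n : ℕ} (A : Matrix (Fin n) (Fin n) ℝ) : ‖A‖ ≤ frobNorm A :=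
  (Matrix.norm_le_iff (frobNorm_nonneg A)).2 fun i j => by
    simpa [Real.norm_eq_abs] using abs_entry_le_frobNorm A i j

lemma frobNorm_le_three_norm (A : Matrix (Fin 3) (Fin 3) ℝ) : frobNorm A ≤ 3 * ‖A‖ := by
  have hb : frobInner A A ≤ (3 * ‖A‖) ^ 2 := by
    have hentry : ∀ i j : Fin 3, A i j * A i j ≤ ‖A‖ ^ 2 := fun i j => by
      have h := Matrix.norm_entry_le_entrywise_sup_norm A (i := i) (j := j)
      have h0 : |A i j| ≤ ‖A‖ := by simpa [Real.norm_eq_abs] using h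
      nlinarith [abs_nonneg (A i j), le_abs_self (A i j), neg_abs_le (A i j)]
    calc frobInner A A = ∑ i, ∑ j, A i j * A i j := rfl
      _ ≤ ∑ _i : Fin 3, ∑ _j : Fin 3, ‖A‖ ^ 2 :=
          Finset.sum_le_sum fun i _ => Finset.sum_le_sum fun j _ => hentry i j
      _ = 9 * ‖A‖ ^ 2 := by simp [Finset.sum_const]; try ring
      _ ≤ (3 * ‖A‖) ^ 2 := by nlinarith [norm_nonneg A]
  calc frobNorm A = Real.sqrt (frobInner A A) := rfl
    _ ≤ Real.sqrt ((3 * ‖A‖) ^ 2) := Real.sqrt_le_sqrt hb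
    _ = 3 * ‖A‖ := Real.sqrt_sq (by positivity)

lemma frobNorm_smul {n : ℕ} (c : ℝ) (A : Matrix (Fin n) (Fin n) ℝ) :
    frobNorm (c • A) = |c| * frobNorm A := by
  have h : frobInner (c • A) (c • A) = c ^ 2 * frobInner A A := by
    simp only [frobInner, Matrix.smul_apply, smul_eq_mul, Finset.mul_sum]
    exact Finset.sum_congr rfl fun i _ => Finset.sum_congr rfl fun j _ => by ring
  rw [frobNorm, h, Real.sqrt_mul (sq_nonneg c), Real.sqrt_sq_eq_abs, frobNorm]

lemma norm_one_le_one : ‖(1 : Matrix (Fin 3) (Fin 3) ℝ)‖ ≤ 1 :=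
  (Matrix.norm_le_iff zero_le_one).2 fun i j => by
    rw [Matrix.one_apply]; split <;> simp

lemma norm_transpose_le (A : Matrix (Fin 3) (Fin 3) ℝ) : ‖Aᵀ‖ ≤ ‖A‖ :=
  (Matrix.norm_le_iff (norm_nonneg A)).2 fun i j =>
    Matrix.norm_entry_le_entrywise_sup_norm A

lemma norm_mul_le_three (A B : Matrix (Fin 3) (Fin 3) ℝ) : ‖A * B‖ ≤ 3 * (‖A‖ * ‖B‖) := by
  refine (Matrix.norm_le_iff (by positivity)).2 fun i j => ?_
  calc ‖(A * B) i j‖ = ‖∑ l, A i l * B l j‖ := by rw [Matrix.mul_apply]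
    _ ≤ ∑ l, ‖A i l * B l j‖ := norm_sum_le _ _
    _ ≤ ∑ _l : Fin 3, ‖A‖ * ‖B‖ := Finset.sum_le_sum fun l _ => by
        rw [norm_mul]
        exact mul_le_mul (Matrix.norm_entry_le_entrywise_sup_norm A)
          (Matrix.norm_entry_le_entrywise_sup_norm B) (norm_nonneg _) (norm_nonneg _)
    _ = 3 * (‖A‖ * ‖B‖) := by simp [Finset.sum_const]; try ring

lemma norm_stdBasis_le (i j : Fin 3) : ‖Matrix.single i j (1:ℝ)‖ ≤ 1 :=
  (Matrix.norm_le_iff zero_le_one).2 fun i' j' => by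
    simp only [Matrix.single, Matrix.of_apply]
    split <;> simp

lemma norm_matGrad_le (f : Matrix (Fin 3) (Fin 3) ℝ → ℝ) (F : Matrix (Fin 3) (Fin 3) ℝ) :
    ‖matGrad f F‖ ≤ ‖fderiv ℝ f F‖ :=
  (Matrix.norm_le_iff (norm_nonneg _)).2 fun i j => by
    calc ‖matGrad f F i j‖ = ‖fderiv ℝ f F (Matrix.single i j 1)‖ := rfl
      _ ≤ ‖fderiv ℝ f F‖ * ‖Matrix.single i j (1:ℝ)‖ := (fderiv ℝ f F).le_opNorm _
      _ ≤ ‖fderiv ℝ f F‖ * 1 := mul_le_mul_of_nonneg_left (norm_stdBasis_le i j) (norm_nonneg _)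
      _ = ‖fderiv ℝ f F‖ := mul_one _

lemma frob_mul_transpose_le (A B : Matrix (Fin 3) (Fin 3) ℝ) :
    frobNorm (A * Bᵀ) ≤ 9 * (‖A‖ * ‖B‖) := by
  calc frobNorm (A * Bᵀ) ≤ 3 * ‖A * Bᵀ‖ := frobNorm_le_three_norm _
    _ ≤ 3 * (3 * (‖A‖ * ‖Bᵀ‖)) :=
        mul_le_mul_of_nonneg_left (norm_mul_le_three A Bᵀ) (by norm_num)
    _ = 9 * (‖A‖ * ‖Bᵀ‖) := by ring
    _ ≤ 9 * (‖A‖ * ‖B‖) := by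
        have := norm_transpose_le B
        nlinarith [norm_nonneg A, norm_nonneg Bᵀ]

lemma one_mem_SO3 : (1 : Matrix (Fin 3) (Fin 3) ℝ) ∈ SO3 :=
  ⟨by simp, Matrix.det_one⟩

lemma distSO3_le (F : Matrix (Fin 3) (Fin 3) ℝ) : distSO3 F ≤ frobNorm (F - 1) :=
  csInf_le ⟨0, fun y hy => by
      obtain ⟨R, _, rfl⟩ := hy
      exact frobNorm_nonneg _⟩
    ⟨1, one_mem_SO3, rfl⟩

lemma exists_deriv_bound (W : Matrix (Fin 3) (Fin 3) ℝ → ℝ≥0∞) (δ : ℝ) (hδ : 0 < δ)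
    (hWId : W 1 = 0)
    (hC2 : ContDiffOn ℝ 2 (wr W) {F : Matrix (Fin 3) (Fin 3) ℝ | distSO3 F < δ}) :
    ∃ L : ℝ, 0 ≤ L ∧ ∀ F : Matrix (Fin 3) (Fin 3) ℝ, ‖F - 1‖ ≤ min (δ / 6) 1 →
      ‖fderiv ℝ (wr W) F‖ ≤ L * ‖F - 1‖ := by
  set ρ : ℝ := min (δ / 6) 1 with hρdef
  have hρpos : 0 < ρ := lt_min (by positivity) one_pos
  set B₀ : Set (Matrix (Fin 3) (Fin 3) ℝ) := Metric.ball 1 (δ / 3) with hB₀def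
  have hB₀sub : B₀ ⊆ {F : Matrix (Fin 3) (Fin 3) ℝ | distSO3 F < δ} := by
    intro F hF
    have h1 : ‖F - 1‖ < δ / 3 := by
      simpa [hB₀def, dist_eq_norm] using hF
    have h2 : distSO3 F ≤ frobNorm (F - 1) := distSO3_le F
    have h3 : frobNorm (F - 1) ≤ 3 * ‖F - 1‖ := frobNorm_le_three_norm _
    have : distSO3 F < δ := by linarith
    exact this
  have hf2 : ContDiffOn ℝ 2 (wr W) B₀ := hC2.mono hB₀sub
  have hg1 : ContDiffOn ℝ 1 (fderiv ℝ (wr W)) B₀ :=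
    hf2.fderiv_of_isOpen Metric.isOpen_ball (by norm_num)
  set K : Set (Matrix (Fin 3) (Fin 3) ℝ) := Metric.closedBall 1 ρ with hKdef
  have hKB₀ : K ⊆ B₀ := by
    apply Metric.closedBall_subset_ball
    have : ρ ≤ δ / 6 := min_le_left _ _
    linarith
  have hKc : IsCompact K := isCompact_closedBall _ _
  have hcont : ContinuousOn (fderiv ℝ (fderiv ℝ (wr W))) B₀ :=
    hg1.continuousOn_fderiv_of_isOpen Metric.isOpen_ball le_rfl
  obtain ⟨C₂, hC₂⟩ := hKc.exists_bound_of_continuousOn (hcont.mono hKB₀)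
  have hmin : fderiv ℝ (wr W) 1 = 0 := by
    have hloc : IsLocalMin (wr W) 1 := by
      apply Filter.Eventually.of_forall
      intro x
      simp only [wr, hWId, ENNReal.toReal_zero]
      exact ENNReal.toReal_nonneg
    exact hloc.fderiv_eq_zero
  refine ⟨max C₂ 0, le_max_right _ _, fun F hF => ?_⟩
  have hFK : F ∈ K := by
    simpa [hKdef, Metric.mem_closedBall, dist_eq_norm] using hF
  have h1K : (1 : Matrix (Fin 3) (Fin 3) ℝ) ∈ K := Metric.mem_closedBall_self hρpos.le
  have hdiff : ∀ x ∈ K, DifferentiableAt ℝ (fderiv ℝ (wr W)) x := fun x hx =>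
    (hg1.differentiableOn one_ne_zero).differentiableAt (Metric.isOpen_ball.mem_nhds (hKB₀ hx))
  have hbd : ∀ x ∈ K, ‖fderiv ℝ (fderiv ℝ (wr W)) x‖ ≤ max C₂ 0 := fun x hx =>
    (hC₂ x hx).trans (le_max_left _ _)
  have := (convex_closedBall (1 : Matrix (Fin 3) (Fin 3) ℝ) ρ).norm_image_sub_le_of_norm_fderiv_le
    hdiff hbd h1K hFK
  rw [hmin] at this
  convert this using 2
  exact (sub_zero _).symm


/-- estimate of `|Ω \ B_h|` and smallness of the stress on `Ω \ B_h`,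
yielding strong `L¹` convergence to 0 of `(1 - χ_h) E_h`. -/
theorem statement4 (Ω : Set (Fin 3 → ℝ)) (hΩm : MeasurableSet Ω) (hΩfin : volume Ω < ⊤)
    (M : ℝ) (hM : 0 < M)
    (W : Matrix (Fin 3) (Fin 3) ℝ → ℝ≥0∞) (δ k : ℝ) (hδ : 0 < δ) (hk : 0 < k)
    (hfin : ∀ F : Matrix (Fin 3) (Fin 3) ℝ, 0 < F.det → W F ≠ ⊤)
    (hC1 : ContDiffOn ℝ 1 (wr W) {F : Matrix (Fin 3) (Fin 3) ℝ | 0 < F.det})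
    (hWId : W 1 = 0)
    (hfinδ : ∀ F : Matrix (Fin 3) (Fin 3) ℝ, distSO3 F < δ → W F ≠ ⊤)
    (hC2 : ContDiffOn ℝ 2 (wr W) {F : Matrix (Fin 3) (Fin 3) ℝ | distSO3 F < δ})
    (hgrowth : ∀ F : Matrix (Fin 3) (Fin 3) ℝ, 0 < F.det →
      frobNorm (matGrad (wr W) F * Fᵀ) ≤ k * (wr W F + 1))
    (t s : ℕ → ℝ) (ht : ∀ h, t h ∈ Set.Ioc (0:ℝ) 1) (hs : ∀ h, s h ∈ Set.Ioc (0:ℝ) 1)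
    (ht0 : Tendsto t atTop (𝓝 0)) (hts : Tendsto (fun h => t h / s h) atTop (𝓝 0))
    (G : ℕ → (Fin 3 → ℝ) → Matrix (Fin 3) (Fin 3) ℝ)
    (hGmeas : ∀ h, ∀ i j, Measurable fun x => G h x i j)
    (hdet : ∀ h, ∀ᵐ x ∂volume.restrict Ω, 0 < (1 + t h • G h x).det)
    (hL2 : ∀ h, ∫⁻ x in Ω, ENNReal.ofReal (frobNorm (G h x) ^ 2) ≤ ENNReal.ofReal (M ^ 2))
    (hEn : ∀ h, ∫⁻ x in Ω, W (1 + t h • G h x) ≤ ENNReal.ofReal (M * t h ^ 2)) :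
    (∀ h, volume (Ω \ {x ∈ Ω | t h * frobNorm (G h x) ≤ s h}) ≤
        ENNReal.ofReal (M ^ 2 * (t h / s h) ^ 2)) ∧
    (∃ C > (0:ℝ), ∀ h,
      ∫⁻ x in Ω \ {x ∈ Ω | t h * frobNorm (G h x) ≤ s h},
          ENNReal.ofReal
            (frobNorm ((t h)⁻¹ • (matGrad (wr W) (1 + t h • G h x) * (1 + t h • G h x)ᵀ)))
        ≤ ENNReal.ofReal (C * (t h / s h))) ∧
    Tendsto (fun h =>
        ∫⁻ x in Ω \ {x ∈ Ω | t h * frobNorm (G h x) ≤ s h},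
          ENNReal.ofReal
            (frobNorm ((t h)⁻¹ • (matGrad (wr W) (1 + t h • G h x) * (1 + t h • G h x)ᵀ))))
      atTop (𝓝 0) := by
  -- measurability of the pointwise Frobenius norm
  have hgmeas : ∀ h, Measurable fun x => frobNorm (G h x) := by
    intro h
    have h1 : Measurable fun x => frobInner (G h x) (G h x) := by
      simp only [frobInner]
      exact Finset.measurable_sum _ fun i _ =>
        Finset.measurable_sum _ fun j _ => (hGmeas h i j).mul (hGmeas h i j)
    exact Measurable.comp Real.continuous_sqrt.measurable h1
  -- Chebyshev-type estimate
  have cheb : ∀ (h : ℕ) (A : Set (Fin 3 → ℝ)) (c : ℝ), MeasurableSet A → A ⊆ Ω → 0 < c →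
      (∀ x ∈ A, c ≤ t h * frobNorm (G h x)) →
      volume A ≤ ENNReal.ofReal ((t h / c) ^ 2 * M ^ 2) := by
    intro h A c hAm hAΩ hc hAc
    calc volume A = ∫⁻ _x in A, 1 := (setLIntegral_one A).symm
      _ ≤ ∫⁻ x in A, ENNReal.ofReal ((t h / c) ^ 2) * ENNReal.ofReal (frobNorm (G h x) ^ 2) := by
          refine lintegral_mono_ae ?_
          filter_upwards [ae_restrict_mem hAm] with x hx
          rw [← ENNReal.ofReal_mul (by positivity), ← ENNReal.ofReal_one]
          apply ENNReal.ofReal_le_ofReal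
          have h1 : (1 : ℝ) ≤ t h * frobNorm (G h x) / c := (one_le_div hc).2 (hAc x hx)
          have h2 : (1:ℝ) ≤ (t h * frobNorm (G h x) / c) ^ 2 := by nlinarith
          have h3 : (t h / c) ^ 2 * frobNorm (G h x) ^ 2
              = (t h * frobNorm (G h x) / c) ^ 2 := by ring
          linarith
      _ = ENNReal.ofReal ((t h / c) ^ 2) * ∫⁻ x in A, ENNReal.ofReal (frobNorm (G h x) ^ 2) :=
          lintegral_const_mul' _ _ ENNReal.ofReal_ne_top
      _ ≤ ENNReal.ofReal ((t h / c) ^ 2) * ENNReal.ofReal (M ^ 2) := by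
          gcongr
          exact le_trans (lintegral_mono' (Measure.restrict_mono hAΩ le_rfl) le_rfl) (hL2 h)
      _ = ENNReal.ofReal ((t h / c) ^ 2 * M ^ 2) := (ENNReal.ofReal_mul (by positivity)).symm
  have hSm : ∀ h, MeasurableSet {x ∈ Ω | t h * frobNorm (G h x) ≤ s h} := fun h =>
    hΩm.inter (measurableSet_le (measurable_const.mul (hgmeas h)) measurable_const)
  have hTm : ∀ h, MeasurableSet (Ω \ {x ∈ Ω | t h * frobNorm (G h x) ≤ s h}) := fun h =>
    hΩm.diff (hSm h)
  have hTsub : ∀ h, Ω \ {x ∈ Ω | t h * frobNorm (G h x) ≤ s h} ⊆ Ω := fun _ => Set.diff_subset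
  have hTlt : ∀ h x, x ∈ Ω \ {x ∈ Ω | t h * frobNorm (G h x) ≤ s h} →
      s h < t h * frobNorm (G h x) := by
    intro h x hx
    exact not_le.1 fun hle => hx.2 ⟨hx.1, hle⟩
  -- Part 1
  have part1 : ∀ h, volume (Ω \ {x ∈ Ω | t h * frobNorm (G h x) ≤ s h}) ≤
      ENNReal.ofReal (M ^ 2 * (t h / s h) ^ 2) := by
    intro h
    have := cheb h _ (s h) (hTm h) (hTsub h) (hs h).1 (fun x hx => (hTlt h x hx).le)
    rwa [mul_comm] at this
  -- derivative bound near the identity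
  obtain ⟨L, hL0, hLb⟩ := exists_deriv_bound W δ hδ hWId hC2
  set ρ : ℝ := min (δ / 6) 1 with hρdef
  have hρpos : 0 < ρ := lt_min (by positivity) one_pos
  have hρ1 : ρ ≤ 1 := min_le_right _ _
  set C : ℝ := 18 * L * M ^ 2 + k * (M + M ^ 2 / ρ ^ 2) + 1 with hCdef
  have hnn1 : 0 ≤ 18 * L * M ^ 2 := mul_nonneg (mul_nonneg (by norm_num) hL0) (sq_nonneg M)
  have hnn2 : 0 ≤ k * (M + M ^ 2 / ρ ^ 2) :=
    mul_nonneg hk.le (add_nonneg hM.le (div_nonneg (sq_nonneg M) (sq_nonneg ρ)))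
  have hCpos : 0 < C := by rw [hCdef]; linarith
  -- the key uniform bound
  have key : ∀ h,
      ∫⁻ x in Ω \ {x ∈ Ω | t h * frobNorm (G h x) ≤ s h},
          ENNReal.ofReal
            (frobNorm ((t h)⁻¹ • (matGrad (wr W) (1 + t h • G h x) * (1 + t h • G h x)ᵀ)))
        ≤ ENNReal.ofReal (C * (t h / s h)) := by
    intro h
    have htpos := (ht h).1
    have hspos := (hs h).1
    have hts0 : (0:ℝ) ≤ t h / s h := div_nonneg htpos.le hspos.le
    have hts1 : t h ≤ t h / s h := by
      rw [le_div_iff₀ hspos]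
      nlinarith [(hs h).2]
    set D : Set (Fin 3 → ℝ) := {x | t h * frobNorm (G h x) ≤ ρ} with hDdef
    have hDm : MeasurableSet D :=
      measurableSet_le (measurable_const.mul (hgmeas h)) measurable_const
    set T : Set (Fin 3 → ℝ) := Ω \ {x ∈ Ω | t h * frobNorm (G h x) ≤ s h} with hTdef
    -- bound on T ∩ D
    have bound1 : ∫⁻ x in T ∩ D,
        ENNReal.ofReal
          (frobNorm ((t h)⁻¹ • (matGrad (wr W) (1 + t h • G h x) * (1 + t h • G h x)ᵀ)))
        ≤ ENNReal.ofReal (18 * L * M ^ 2 * (t h / s h)) := by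
      have hmono : ∀ᵐ x ∂volume.restrict (T ∩ D),
          ENNReal.ofReal
            (frobNorm ((t h)⁻¹ • (matGrad (wr W) (1 + t h • G h x) * (1 + t h • G h x)ᵀ)))
          ≤ ENNReal.ofReal (18 * L * (t h / s h)) * ENNReal.ofReal (frobNorm (G h x) ^ 2) := by
        filter_upwards [ae_restrict_mem ((hTm h).inter hDm)] with x hx
        obtain ⟨hxT, hxD⟩ := hx
        set F : Matrix (Fin 3) (Fin 3) ℝ := 1 + t h • G h x with hFdef
        have hgx : 0 ≤ frobNorm (G h x) := frobNorm_nonneg _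
        have hFsub : F - 1 = t h • G h x := by rw [hFdef]; abel
        have hnorm1 : ‖F - 1‖ ≤ t h * frobNorm (G h x) := by
          rw [hFsub]
          calc ‖t h • G h x‖ ≤ frobNorm (t h • G h x) := norm_le_frobNorm _
            _ = |t h| * frobNorm (G h x) := frobNorm_smul _ _
            _ = t h * frobNorm (G h x) := by rw [abs_of_pos htpos]
        have hxD' : t h * frobNorm (G h x) ≤ ρ := hxD
        have hder : ‖fderiv ℝ (wr W) F‖ ≤ L * (t h * frobNorm (G h x)) := by
          have hF1 := hLb F (hnorm1.trans hxD')
          calc ‖fderiv ℝ (wr W) F‖ ≤ L * ‖F - 1‖ := hF1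
            _ ≤ L * (t h * frobNorm (G h x)) := mul_le_mul_of_nonneg_left hnorm1 hL0
        have hFnorm : ‖F‖ ≤ 2 := by
          have h2 : ‖t h • G h x‖ ≤ ρ := by
            rw [← hFsub]; exact hnorm1.trans hxD'
          calc ‖F‖ ≤ ‖(1 : Matrix (Fin 3) (Fin 3) ℝ)‖ + ‖t h • G h x‖ := by
                rw [hFdef]; exact norm_add_le _ _
            _ ≤ 1 + ρ := add_le_add norm_one_le_one h2
            _ ≤ 2 := by linarith
        have hfrob : frobNorm (matGrad (wr W) F * Fᵀ) ≤ 18 * L * (t h * frobNorm (G h x)) := by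
          calc frobNorm (matGrad (wr W) F * Fᵀ) ≤ 9 * (‖matGrad (wr W) F‖ * ‖F‖) :=
              frob_mul_transpose_le _ _
            _ ≤ 9 * ((L * (t h * frobNorm (G h x))) * 2) := by
                have h1 := norm_matGrad_le (wr W) F
                have h2 := h1.trans hder
                have h3 : 0 ≤ L * (t h * frobNorm (G h x)) :=
                  mul_nonneg hL0 (mul_nonneg htpos.le hgx)
                nlinarith [norm_nonneg (matGrad (wr W) F), norm_nonneg F]
            _ = 18 * L * (t h * frobNorm (G h x)) := by ring
        have hE : frobNorm ((t h)⁻¹ • (matGrad (wr W) F * Fᵀ)) ≤ 18 * L * frobNorm (G h x) := by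
          rw [frobNorm_smul, abs_of_pos (inv_pos.2 htpos)]
          calc (t h)⁻¹ * frobNorm (matGrad (wr W) F * Fᵀ)
              ≤ (t h)⁻¹ * (18 * L * (t h * frobNorm (G h x))) :=
                mul_le_mul_of_nonneg_left hfrob (inv_nonneg.2 htpos.le)
            _ = 18 * L * frobNorm (G h x) := by field_simp
        have hTx : s h < t h * frobNorm (G h x) := hTlt h x hxT
        have hg2 : frobNorm (G h x) ≤ (t h / s h) * frobNorm (G h x) ^ 2 := by
          rw [div_mul_eq_mul_div, le_div_iff₀ hspos]
          nlinarith [mul_le_mul_of_nonneg_left hTx.le hgx]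
        rw [← ENNReal.ofReal_mul (mul_nonneg (mul_nonneg (by norm_num) hL0) hts0)]
        apply ENNReal.ofReal_le_ofReal
        calc frobNorm ((t h)⁻¹ • (matGrad (wr W) F * Fᵀ)) ≤ 18 * L * frobNorm (G h x) := hE
          _ ≤ 18 * L * ((t h / s h) * frobNorm (G h x) ^ 2) :=
              mul_le_mul_of_nonneg_left hg2 (mul_nonneg (by norm_num) hL0)
          _ = 18 * L * (t h / s h) * frobNorm (G h x) ^ 2 := by ring
      calc ∫⁻ x in T ∩ D,
            ENNReal.ofReal
              (frobNorm ((t h)⁻¹ • (matGrad (wr W) (1 + t h • G h x) * (1 + t h • G h x)ᵀ)))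
          ≤ ∫⁻ x in T ∩ D,
              ENNReal.ofReal (18 * L * (t h / s h)) * ENNReal.ofReal (frobNorm (G h x) ^ 2) :=
            lintegral_mono_ae hmono
        _ = ENNReal.ofReal (18 * L * (t h / s h)) *
              ∫⁻ x in T ∩ D, ENNReal.ofReal (frobNorm (G h x) ^ 2) :=
            lintegral_const_mul' _ _ ENNReal.ofReal_ne_top
        _ ≤ ENNReal.ofReal (18 * L * (t h / s h)) * ENNReal.ofReal (M ^ 2) := by
            gcongr
            refine le_trans (lintegral_mono' (Measure.restrict_mono ?_ le_rfl) le_rfl) (hL2 h)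
            exact (Set.inter_subset_left).trans (hTsub h)
        _ = ENNReal.ofReal (18 * L * M ^ 2 * (t h / s h)) := by
            rw [← ENNReal.ofReal_mul (mul_nonneg (mul_nonneg (by norm_num) hL0) hts0)]
            congr 1
            ring
    -- bound on T \ D
    have bound2 : ∫⁻ x in T \ D,
        ENNReal.ofReal
          (frobNorm ((t h)⁻¹ • (matGrad (wr W) (1 + t h • G h x) * (1 + t h • G h x)ᵀ)))
        ≤ ENNReal.ofReal (k * (M + M ^ 2 / ρ ^ 2) * (t h / s h)) := by
      have hAm : MeasurableSet (T \ D) := (hTm h).diff hDm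
      have hAΩ : T \ D ⊆ Ω := (Set.diff_subset).trans (hTsub h)
      have hAc : ∀ x ∈ T \ D, ρ ≤ t h * frobNorm (G h x) := fun x hx => (not_le.1 hx.2).le
      have hμA : volume (T \ D) ≤ ENNReal.ofReal ((t h / ρ) ^ 2 * M ^ 2) :=
        cheb h (T \ D) ρ hAm hAΩ hρpos hAc
      have hptwise : ∀ᵐ x ∂volume.restrict (T \ D),
          ENNReal.ofReal
            (frobNorm ((t h)⁻¹ • (matGrad (wr W) (1 + t h • G h x) * (1 + t h • G h x)ᵀ)))
          ≤ ENNReal.ofReal (k * (t h)⁻¹) * (W (1 + t h • G h x) + 1) := by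
        filter_upwards [ae_mono (Measure.restrict_mono hAΩ le_rfl) (hdet h)] with x hdx
        set F : Matrix (Fin 3) (Fin 3) ℝ := 1 + t h • G h x with hFdef
        have hW := hgrowth F hdx
        have hfin' := hfin F hdx
        have h1 : frobNorm ((t h)⁻¹ • (matGrad (wr W) F * Fᵀ))
            ≤ k * (t h)⁻¹ * (wr W F + 1) := by
          rw [frobNorm_smul, abs_of_pos (inv_pos.2 htpos)]
          calc (t h)⁻¹ * frobNorm (matGrad (wr W) F * Fᵀ)
              ≤ (t h)⁻¹ * (k * (wr W F + 1)) :=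
                mul_le_mul_of_nonneg_left hW (inv_nonneg.2 htpos.le)
            _ = k * (t h)⁻¹ * (wr W F + 1) := by ring
        have hwr0 : 0 ≤ wr W F := ENNReal.toReal_nonneg
        calc ENNReal.ofReal (frobNorm ((t h)⁻¹ • (matGrad (wr W) F * Fᵀ)))
            ≤ ENNReal.ofReal (k * (t h)⁻¹ * (wr W F + 1)) := ENNReal.ofReal_le_ofReal h1
          _ = ENNReal.ofReal (k * (t h)⁻¹) * ENNReal.ofReal (wr W F + 1) :=
              ENNReal.ofReal_mul (mul_nonneg hk.le (inv_nonneg.2 htpos.le))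
          _ = ENNReal.ofReal (k * (t h)⁻¹) * (W F + 1) := by
              rw [ENNReal.ofReal_add hwr0 zero_le_one, ENNReal.ofReal_one]
              congr 1
              simp only [wr]
              rw [ENNReal.ofReal_toReal hfin']
      calc ∫⁻ x in T \ D,
            ENNReal.ofReal
              (frobNorm ((t h)⁻¹ • (matGrad (wr W) (1 + t h • G h x) * (1 + t h • G h x)ᵀ)))
          ≤ ∫⁻ x in T \ D, ENNReal.ofReal (k * (t h)⁻¹) * (W (1 + t h • G h x) + 1) :=
            lintegral_mono_ae hptwise
        _ = ENNReal.ofReal (k * (t h)⁻¹) * ∫⁻ x in T \ D, (W (1 + t h • G h x) + 1) :=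
            lintegral_const_mul' _ _ ENNReal.ofReal_ne_top
        _ = ENNReal.ofReal (k * (t h)⁻¹) *
              ((∫⁻ x in T \ D, W (1 + t h • G h x)) + volume (T \ D)) := by
            rw [lintegral_add_right' _ aemeasurable_const, setLIntegral_one]
        _ ≤ ENNReal.ofReal (k * (t h)⁻¹) *
              (ENNReal.ofReal (M * t h ^ 2) + ENNReal.ofReal ((t h / ρ) ^ 2 * M ^ 2)) := by
            gcongr
            · exact le_trans (lintegral_mono' (Measure.restrict_mono hAΩ le_rfl) le_rfl) (hEn h)
        _ = ENNReal.ofReal ((k * (t h)⁻¹) * (M * t h ^ 2 + (t h / ρ) ^ 2 * M ^ 2)) := by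
            rw [← ENNReal.ofReal_add (mul_nonneg hM.le (sq_nonneg _))
              (mul_nonneg (sq_nonneg _) (sq_nonneg _)),
              ← ENNReal.ofReal_mul (mul_nonneg hk.le (inv_nonneg.2 htpos.le))]
        _ ≤ ENNReal.ofReal (k * (M + M ^ 2 / ρ ^ 2) * (t h / s h)) := by
            apply ENNReal.ofReal_le_ofReal
            have hts0' : t h ≠ 0 := htpos.ne'
            have hρ0' : ρ ≠ 0 := hρpos.ne'
            have hid : (k * (t h)⁻¹) * (M * t h ^ 2 + (t h / ρ) ^ 2 * M ^ 2)
                = k * (M + M ^ 2 / ρ ^ 2) * t h := by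
              field_simp
            rw [hid]
            exact mul_le_mul_of_nonneg_left hts1 hnn2
    calc ∫⁻ x in T,
          ENNReal.ofReal
            (frobNorm ((t h)⁻¹ • (matGrad (wr W) (1 + t h • G h x) * (1 + t h • G h x)ᵀ)))
        = ∫⁻ x in (T ∩ D) ∪ (T \ D),
            ENNReal.ofReal
              (frobNorm ((t h)⁻¹ • (matGrad (wr W) (1 + t h • G h x) * (1 + t h • G h x)ᵀ))) := by
          rw [Set.inter_union_diff]
      _ ≤ (∫⁻ x in T ∩ D,
            ENNReal.ofReal
              (frobNorm ((t h)⁻¹ • (matGrad (wr W) (1 + t h • G h x) * (1 + t h • G h x)ᵀ))))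
          + ∫⁻ x in T \ D,
              ENNReal.ofReal
                (frobNorm ((t h)⁻¹ • (matGrad (wr W) (1 + t h • G h x) * (1 + t h • G h x)ᵀ))) :=
          lintegral_union_le _ _ _
      _ ≤ ENNReal.ofReal (18 * L * M ^ 2 * (t h / s h))
          + ENNReal.ofReal (k * (M + M ^ 2 / ρ ^ 2) * (t h / s h)) := add_le_add bound1 bound2
      _ = ENNReal.ofReal (18 * L * M ^ 2 * (t h / s h)
            + k * (M + M ^ 2 / ρ ^ 2) * (t h / s h)) :=
          (ENNReal.ofReal_add (mul_nonneg hnn1 hts0) (mul_nonneg hnn2 hts0)).symm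
      _ ≤ ENNReal.ofReal (C * (t h / s h)) := by
          apply ENNReal.ofReal_le_ofReal
          rw [hCdef]
          nlinarith [hts0]
  -- conclusion
  refine ⟨part1, ⟨C, hCpos, key⟩, ?_⟩
  have hC3 : Tendsto (fun h => ENNReal.ofReal (C * (t h / s h))) atTop (𝓝 0) := by
    have h1 : Tendsto (fun h => C * (t h / s h)) atTop (𝓝 (C * 0)) := hts.const_mul C
    rw [mul_zero] at h1
    have h2 := (ENNReal.continuous_ofReal.tendsto 0).comp h1
    simpa [Function.comp_def] using h2
  exact tendsto_of_tendsto_of_tendsto_of_le_of_le tendsto_const_nhds hC3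
    (fun h => zero_le) (fun h => key h)
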